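/- Let H₁ and H₂ be numerical semigroups, let x₁ ∈ H₁ ∖ G(H₁) and x₂ ∈ H₂ ∖ G(H₂) be nonzero with gcd(x₁, x₂) = 1, and let H = x₂·H₁ + x₁·H₂ be their gluing. Then H is symmetric if and only if both H₁ and H₂ are symmetric. -/

import Mathlib

/-- A numerical semigroup: an additive submonoid of `ℕ` with finite complement. -/
def IsNumericalSemigroup (H : Set ℕ) : Prop :=
  0 ∈ H ∧ (∀ a ∈ H, ∀ b ∈ H, a + b ∈ H) ∧ Hᶜ.Finite

/-- The minimal generating system `G(H) = (H \ {0}) \ ((H \ {0}) + (H \ {0}))`. -/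
def minGens (H : Set ℕ) : Set ℕ :=
  (H \ {0}) \ {x | ∃ a ∈ H \ {0}, ∃ b ∈ H \ {0}, x = a + b}

/-- The Apéry set `Ap(H, s) = {a ∈ H : a - s ∉ H}` (the subtraction taken in `ℤ`,
i.e. `a` is not of the form `b + s` with `b ∈ H`). -/
def apery (H : Set ℕ) (s : ℕ) : Set ℕ :=
  {a | a ∈ H ∧ ¬ ∃ b ∈ H, a = b + s}

/-- The gluing `x₂·H₁ + x₁·H₂` of two numerical semigroups. -/
def glue (x₂ : ℕ) (H₁ : Set ℕ) (x₁ : ℕ) (H₂ : Set ℕ) : Set ℕ :=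
  {n | ∃ a ∈ H₁, ∃ b ∈ H₂, n = x₂ * a + x₁ * b}

/-- Membership of an integer in (the image in `ℤ` of) a numerical semigroup. -/
def intMem (H : Set ℕ) (z : ℤ) : Prop := ∃ n ∈ H, (n : ℤ) = z

/-- `F` is the Frobenius number of `H`: the largest integer not belonging to `H`
(with the convention `F(ℕ) = -1`). -/
def IsFrobeniusNumber (H : Set ℕ) (F : ℤ) : Prop :=
  ¬ intMem H F ∧ ∀ z : ℤ, F < z → intMem H z

/-- `H` is symmetric: for every `z ∈ ℤ`, either `z ∈ H` or `F(H) - z ∈ H`. -/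
def IsSymmetricNSG (H : Set ℕ) : Prop :=
  ∃ F : ℤ, IsFrobeniusNumber H F ∧ ∀ z : ℤ, intMem H z ∨ intMem H (F - z)

lemma intMem_nonneg {H : Set ℕ} {z : ℤ} (h : intMem H z) : 0 ≤ z := by
  obtain ⟨n, -, rfl⟩ := h; positivity

lemma intMem_add {H : Set ℕ} (hH : IsNumericalSemigroup H) {a b : ℤ}
    (ha : intMem H a) (hb : intMem H b) : intMem H (a + b) := by
  obtain ⟨m, hm, rfl⟩ := ha
  obtain ⟨n, hn, rfl⟩ := hb
  exact ⟨m + n, hH.2.1 m hm n hn, by push_cast; ring⟩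

lemma intMem_add_mul {H : Set ℕ} (hH : IsNumericalSemigroup H) {x : ℕ} (hx : x ∈ H)
    {a : ℤ} (ha : intMem H a) (t : ℕ) : intMem H (a + x * t) := by
  induction t with
  | zero => simpa using ha
  | succ n ih =>
      have h2 := intMem_add hH ih ⟨x, hx, rfl⟩
      have heq : a + (x:ℤ) * ((n:ℕ)+1 : ℕ) = a + x*n + x := by push_cast; ring
      rw [heq]; exact h2

lemma intMem_add_mul' {H : Set ℕ} (hH : IsNumericalSemigroup H) {x : ℕ} (hx : x ∈ H)
    {a t : ℤ} (ht : 0 ≤ t) (ha : intMem H a) : intMem H (a + x * t) := by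
  have h := intMem_add_mul hH hx ha t.toNat
  rwa [Int.toNat_of_nonneg ht] at h

lemma frob_not_mem_sub {H : Set ℕ} {F : ℤ} {x : ℕ} (hH : IsNumericalSemigroup H)
    (hF : IsFrobeniusNumber H F) (hx : x ∈ H) {k : ℤ} (hk : k ≤ 0) :
    ¬ intMem H (F + x * k) := by
  intro h
  apply hF.1
  have h2 := intMem_add_mul' hH hx (t := -k) (by linarith) h
  have : F + (x:ℤ)*k + x*(-k) = F := by ring
  rwa [this] at h2

lemma exists_frobenius {H : Set ℕ} (hH : IsNumericalSemigroup H) :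
    ∃ F : ℤ, IsFrobeniusNumber H F := by
  classical
  by_cases h : Hᶜ.Nonempty
  · have hs : hH.2.2.toFinset.Nonempty := by
      rwa [Set.Finite.toFinset_nonempty]
    set m := hH.2.2.toFinset.max' hs with hm
    refine ⟨(m : ℤ), ?_, ?_⟩
    · rintro ⟨n, hn, hcast⟩
      have hnm : n = m := by exact_mod_cast hcast
      have hcm : m ∈ Hᶜ := by
        have := hH.2.2.toFinset.max'_mem hs
        rwa [Set.Finite.mem_toFinset] at this
      exact hcm (hnm ▸ hn)
    · intro z hz
      have hz0 : 0 ≤ z := le_trans (by positivity) (le_of_lt hz)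
      refine ⟨z.toNat, ?_, Int.toNat_of_nonneg hz0⟩
      by_contra hmem
      have : z.toNat ∈ hH.2.2.toFinset := by rwa [Set.Finite.mem_toFinset]
      have := hH.2.2.toFinset.le_max' _ this
      have : (z.toNat : ℤ) ≤ m := by exact_mod_cast this
      rw [Int.toNat_of_nonneg hz0] at this
      omega
  · refine ⟨-1, ?_, ?_⟩
    · intro hmem
      have := intMem_nonneg hmem; omega
    · intro z hz
      have hz0 : 0 ≤ z := by omega
      refine ⟨z.toNat, ?_, Int.toNat_of_nonneg hz0⟩
      by_contra hmem
      exact h ⟨z.toNat, hmem⟩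

lemma glue_intMem {H₁ H₂ : Set ℕ} {x₁ x₂ : ℕ} {z : ℤ} :
    intMem (glue x₂ H₁ x₁ H₂) z ↔
      ∃ a b : ℤ, intMem H₁ a ∧ intMem H₂ b ∧ z = x₂ * a + x₁ * b := by
  constructor
  · rintro ⟨n, ⟨a, ha, b, hb, rfl⟩, rfl⟩
    exact ⟨a, b, ⟨a, ha, rfl⟩, ⟨b, hb, rfl⟩, by push_cast; ring⟩
  · rintro ⟨a, b, ⟨a', ha, rfl⟩, ⟨b', hb, rfl⟩, rfl⟩
    exact ⟨x₂ * a' + x₁ * b', ⟨a', ha, b', hb, rfl⟩, by push_cast; ring⟩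

lemma glue_ns (hH₁ : IsNumericalSemigroup H₁) (hH₂ : IsNumericalSemigroup H₂)
    {x₁ x₂ : ℕ} {a b : ℤ} (ha : intMem (glue x₂ H₁ x₁ H₂) a)
    (hb : intMem (glue x₂ H₁ x₁ H₂) b) : intMem (glue x₂ H₁ x₁ H₂) (a + b) := by
  rw [glue_intMem] at ha hb ⊢
  obtain ⟨a1, b1, h1, h2, rfl⟩ := ha
  obtain ⟨a2, b2, h3, h4, rfl⟩ := hb
  exact ⟨a1 + a2, b1 + b2, intMem_add hH₁ h1 h3, intMem_add hH₂ h2 h4, by ring⟩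

lemma coprime_int {x₁ x₂ : ℕ} (hgcd : Nat.gcd x₁ x₂ = 1) : IsCoprime (x₁ : ℤ) (x₂ : ℤ) := by
  rw [Int.isCoprime_iff_gcd_eq_one]
  simpa using hgcd

lemma rep_shift {x₁ x₂ : ℕ} (hgcd : Nat.gcd x₁ x₂ = 1) (hx₁0 : x₁ ≠ 0)
    {a b a' b' : ℤ} (h : (x₂:ℤ) * a + x₁ * b = x₂ * a' + x₁ * b') :
    ∃ k : ℤ, a' = a + x₁ * k ∧ b' = b - x₂ * k := by
  have hco := coprime_int hgcd
  have h2 : (x₁:ℤ) * (b - b') = x₂ * (a' - a) := by linear_combination h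
  have hdvd : (x₁:ℤ) ∣ (a' - a) := hco.dvd_of_dvd_mul_left ⟨b - b', h2.symm⟩
  obtain ⟨k, hk⟩ := hdvd
  have hx₁z : (x₁:ℤ) ≠ 0 := by exact_mod_cast hx₁0
  refine ⟨k, by linarith, ?_⟩
  have h3 : (x₁:ℤ) * (b' - (b - x₂ * k)) = 0 := by linear_combination -h2 - (x₂:ℤ) * hk
  have := (mul_eq_zero.mp h3).resolve_left hx₁z
  linarith

lemma glue_mem_iff {H₁ H₂ : Set ℕ} {x₁ x₂ : ℕ} (hgcd : Nat.gcd x₁ x₂ = 1) (hx₁0 : x₁ ≠ 0)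
    {z a b : ℤ} (hz : z = x₂ * a + x₁ * b) :
    intMem (glue x₂ H₁ x₁ H₂) z ↔
      ∃ k : ℤ, intMem H₁ (a + x₁ * k) ∧ intMem H₂ (b - x₂ * k) := by
  rw [glue_intMem]
  constructor
  · rintro ⟨a', b', ha', hb', hz'⟩
    obtain ⟨k, hk1, hk2⟩ := rep_shift hgcd hx₁0 (hz.symm.trans hz')
    exact ⟨k, hk1 ▸ ha', hk2 ▸ hb'⟩
  · rintro ⟨k, h1, h2⟩
    exact ⟨a + x₁ * k, b - x₂ * k, h1, h2, by rw [hz]; ring⟩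

lemma exists_bezout {x₁ x₂ : ℕ} (hgcd : Nat.gcd x₁ x₂ = 1) (z : ℤ) :
    ∃ a b : ℤ, z = x₂ * a + x₁ * b := by
  obtain ⟨u, v, huv⟩ := coprime_int hgcd
  exact ⟨v * z, u * z, by linear_combination -z * huv⟩

section main
variable {H₁ H₂ : Set ℕ} {x₁ x₂ : ℕ} {F₁ F₂ : ℤ}

lemma one_le_x {x : ℕ} (hx0 : x ≠ 0) : (1:ℤ) ≤ (x:ℤ) := by exact_mod_cast Nat.one_le_iff_ne_zero.2 hx0

lemma lemA (hH₁ : IsNumericalSemigroup H₁) (hH₂ : IsNumericalSemigroup H₂)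
    (hx₁ : x₁ ∈ H₁) (hx₂ : x₂ ∈ H₂) (hx₁0 : x₁ ≠ 0) (hgcd : Nat.gcd x₁ x₂ = 1)
    (hF₁ : IsFrobeniusNumber H₁ F₁) (hF₂ : IsFrobeniusNumber H₂ F₂) {β : ℤ} :
    intMem (glue x₂ H₁ x₁ H₂) (x₂ * F₁ + x₁ * β) ↔ intMem H₂ (β - x₂) := by
  rw [glue_mem_iff hgcd hx₁0 rfl]
  constructor
  · rintro ⟨k, h1, h2⟩
    rcases le_or_gt k 0 with hk | hk
    · exact absurd h1 (frob_not_mem_sub hH₁ hF₁ hx₁ hk)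
    · have h3 := intMem_add_mul' hH₂ hx₂ (t := k - 1) (by linarith) h2
      have heq : β - (x₂:ℤ) * k + x₂ * (k - 1) = β - x₂ := by ring
      rwa [heq] at h3
  · intro h
    refine ⟨1, ?_, by simpa using h⟩
    exact hF₁.2 _ (by have := one_le_x hx₁0; linarith)

lemma lemA' (hH₁ : IsNumericalSemigroup H₁) (hH₂ : IsNumericalSemigroup H₂)
    (hx₁ : x₁ ∈ H₁) (hx₂ : x₂ ∈ H₂) (hx₁0 : x₁ ≠ 0) (hx₂0 : x₂ ≠ 0)
    (hgcd : Nat.gcd x₁ x₂ = 1)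
    (hF₁ : IsFrobeniusNumber H₁ F₁) (hF₂ : IsFrobeniusNumber H₂ F₂) {α : ℤ} :
    intMem (glue x₂ H₁ x₁ H₂) (x₂ * α + x₁ * F₂) ↔ intMem H₁ (α - x₁) := by
  rw [glue_mem_iff hgcd hx₁0 rfl]
  constructor
  · rintro ⟨k, h1, h2⟩
    rcases le_or_gt k (-1) with hk | hk
    · have h3 := intMem_add_mul' hH₁ hx₁ (t := -k - 1) (by linarith) h1
      have heq : α + (x₁:ℤ) * k + x₁ * (-k - 1) = α - x₁ := by ring
      rwa [heq] at h3
    · have hk0 : -k ≤ 0 := by linarith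
      have := frob_not_mem_sub hH₂ hF₂ hx₂ hk0
      have heq : F₂ + (x₂:ℤ) * (-k) = F₂ - x₂ * k := by ring
      rw [heq] at this
      exact absurd h2 this
  · intro h
    refine ⟨-1, by convert h using 2; ring, ?_⟩
    exact hF₂.2 _ (by have := one_le_x hx₂0; linarith)

lemma frob_glue_not_mem (hH₁ : IsNumericalSemigroup H₁) (hH₂ : IsNumericalSemigroup H₂)
    (hx₁ : x₁ ∈ H₁) (hx₂ : x₂ ∈ H₂) (hx₁0 : x₁ ≠ 0) (hgcd : Nat.gcd x₁ x₂ = 1)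
    (hF₁ : IsFrobeniusNumber H₁ F₁) (hF₂ : IsFrobeniusNumber H₂ F₂) :
    ¬ intMem (glue x₂ H₁ x₁ H₂) (x₂ * F₁ + x₁ * F₂ + x₁ * x₂) := by
  rw [glue_mem_iff hgcd hx₁0 (show (x₂:ℤ) * F₁ + x₁ * F₂ + x₁ * x₂ = x₂ * F₁ + x₁ * (F₂ + x₂) by ring)]
  rintro ⟨k, h1, h2⟩
  rcases le_or_gt k 0 with hk | hk
  · exact frob_not_mem_sub hH₁ hF₁ hx₁ hk h1
  · have heq : F₂ + (x₂:ℤ) + -(x₂ * k) = F₂ + x₂ * (1 - k) := by ring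
    have h2' : intMem H₂ (F₂ + (x₂:ℤ) * (1 - k)) := by
      have : F₂ + (x₂:ℤ) - x₂ * k = F₂ + x₂ * (1 - k) := by ring
      rwa [this] at h2
    exact frob_not_mem_sub hH₂ hF₂ hx₂ (by linarith : 1 - k ≤ 0) h2'

lemma glue_symm_of_symm (hH₁ : IsNumericalSemigroup H₁) (hH₂ : IsNumericalSemigroup H₂)
    (hx₁ : x₁ ∈ H₁) (hx₂ : x₂ ∈ H₂) (hx₁0 : x₁ ≠ 0) (hx₂0 : x₂ ≠ 0)
    (hgcd : Nat.gcd x₁ x₂ = 1)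
    (hF₁ : IsFrobeniusNumber H₁ F₁) (hF₂ : IsFrobeniusNumber H₂ F₂)
    (hs₁ : ∀ z : ℤ, intMem H₁ z ∨ intMem H₁ (F₁ - z))
    (hs₂ : ∀ z : ℤ, intMem H₂ z ∨ intMem H₂ (F₂ - z)) (z : ℤ) :
    intMem (glue x₂ H₁ x₁ H₂) z ∨
      intMem (glue x₂ H₁ x₁ H₂) (x₂ * F₁ + x₁ * F₂ + x₁ * x₂ - z) := by
  by_cases hz : intMem (glue x₂ H₁ x₁ H₂) z
  · exact Or.inl hz
  right
  obtain ⟨a, b, hzab⟩ := exists_bezout hgcd z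
  have hone₂ := one_le_x hx₂0
  -- greatest k with intMem H₂ (b - x₂ * k)
  obtain ⟨k₀, hk₀, hmax⟩ := Int.exists_greatest_of_bdd
    (P := fun k => intMem H₂ (b - x₂ * k))
    ⟨|b|, by
      intro k hk
      have h0 := intMem_nonneg hk
      rcases le_or_gt k 0 with h | h
      · have := abs_nonneg b; linarith
      · have hkx : k ≤ (x₂:ℤ) * k := by nlinarith
        have := le_abs_self b; linarith⟩
    ⟨-(|b| + |F₂| + 1), by
      apply hF₂.2
      have h1 := le_abs_self F₂
      have h2 := neg_abs_le b
      have h3 : (0:ℤ) ≤ |b| + |F₂| + 1 := by positivity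
      nlinarith⟩
  have hnot1 : ¬ intMem H₁ (a + x₁ * k₀) := by
    intro h1
    exact hz ((glue_mem_iff hgcd hx₁0 hzab).2 ⟨k₀, h1, hk₀⟩)
  have hnot2 : ¬ intMem H₂ (b - x₂ * (k₀ + 1)) := by
    intro h2
    have := hmax (k₀ + 1) h2
    omega
  have hm1 : intMem H₁ (F₁ - (a + x₁ * k₀)) := (hs₁ _).resolve_left hnot1
  have hm2 : intMem H₂ (F₂ - (b - x₂ * (k₀ + 1))) := (hs₂ _).resolve_left hnot2
  rw [glue_intMem]
  exact ⟨F₁ - (a + x₁ * k₀), F₂ - (b - x₂ * (k₀ + 1)), hm1, hm2,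
    by rw [hzab]; ring⟩

end main

theorem symmetric_of_gluing_iff (H₁ H₂ : Set ℕ)
    (hH₁ : IsNumericalSemigroup H₁) (hH₂ : IsNumericalSemigroup H₂)
    (x₁ x₂ : ℕ) (hx₁ : x₁ ∈ H₁ \ minGens H₁) (hx₂ : x₂ ∈ H₂ \ minGens H₂)
    (hx₁0 : x₁ ≠ 0) (hx₂0 : x₂ ≠ 0) (hgcd : Nat.gcd x₁ x₂ = 1) :
    IsSymmetricNSG (glue x₂ H₁ x₁ H₂) ↔ IsSymmetricNSG H₁ ∧ IsSymmetricNSG H₂ := by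
  obtain ⟨hx₁H, -⟩ := hx₁
  obtain ⟨hx₂H, -⟩ := hx₂
  have hone₁ := one_le_x hx₁0
  have hone₂ := one_le_x hx₂0
  have hzero₁ : intMem H₁ 0 := ⟨0, hH₁.1, rfl⟩
  have hzero₂ : intMem H₂ 0 := ⟨0, hH₂.1, rfl⟩
  constructor
  · rintro ⟨F', hF', hs⟩
    obtain ⟨F₁, hF₁⟩ := exists_frobenius hH₁
    obtain ⟨F₂, hF₂⟩ := exists_frobenius hH₂
    have hexcl : ∀ w : ℤ, intMem (glue x₂ H₁ x₁ H₂) w →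
        ¬ intMem (glue x₂ H₁ x₁ H₂) (F' - w) := by
      intro w hw hw'
      apply hF'.1
      have h := glue_ns hH₁ hH₂ hw hw'
      have heq : w + (F' - w) = F' := by ring
      rwa [heq] at h
    have hB : ∀ β : ℤ, intMem H₂ β ↔
        ¬ intMem (glue x₂ H₁ x₁ H₂) (F' - x₂*F₁ - x₁*x₂ - x₁*β) := by
      intro β
      constructor
      · intro hβ
        have hmem : intMem (glue x₂ H₁ x₁ H₂) (x₂*F₁ + x₁*(β + x₂)) := by
          apply (lemA hH₁ hH₂ hx₁H hx₂H hx₁0 hgcd hF₁ hF₂).2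
          simpa using hβ
        have h := hexcl _ hmem
        have heq : F' - (x₂*F₁ + x₁*(β + (x₂:ℤ))) = F' - x₂*F₁ - x₁*x₂ - x₁*β := by ring
        rwa [heq] at h
      · intro hng
        have h := (hs (F' - x₂*F₁ - x₁*x₂ - x₁*β)).resolve_left hng
        have heq : F' - (F' - (x₂:ℤ)*F₁ - x₁*x₂ - x₁*β) = x₂*F₁ + x₁*(β + x₂) := by ring
        rw [heq] at h
        have h2 := (lemA hH₁ hH₂ hx₁H hx₂H hx₁0 hgcd hF₁ hF₂).1 h
        simpa using h2
    have hB' : ∀ α : ℤ, intMem H₁ α ↔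
        ¬ intMem (glue x₂ H₁ x₁ H₂) (F' - x₁*F₂ - x₁*x₂ - x₂*α) := by
      intro α
      constructor
      · intro hα
        have hmem : intMem (glue x₂ H₁ x₁ H₂) (x₂*(α + x₁) + x₁*F₂) := by
          apply (lemA' hH₁ hH₂ hx₁H hx₂H hx₁0 hx₂0 hgcd hF₁ hF₂).2
          simpa using hα
        have h := hexcl _ hmem
        have heq : F' - ((x₂:ℤ)*(α + x₁) + x₁*F₂) = F' - x₁*F₂ - x₁*x₂ - x₂*α := by ring
        rwa [heq] at h
      · intro hng
        have h := (hs (F' - x₁*F₂ - x₁*x₂ - x₂*α)).resolve_left hng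
        have heq : F' - (F' - (x₁:ℤ)*F₂ - x₁*x₂ - x₂*α) = x₂*(α + x₁) + x₁*F₂ := by ring
        rw [heq] at h
        have h2 := (lemA' hH₁ hH₂ hx₁H hx₂H hx₁0 hx₂0 hgcd hF₁ hF₂).1 h
        simpa using h2
    -- representation of F' - x₂F₁ - x₁x₂ - x₁F₂
    have hgF₂ : intMem (glue x₂ H₁ x₁ H₂) (F' - x₂*F₁ - x₁*x₂ - x₁*F₂) := by
      by_contra hn
      exact hF₂.1 ((hB F₂).mpr hn)
    rw [glue_intMem] at hgF₂
    obtain ⟨c, d, hc, hd, heq⟩ := hgF₂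
    have hd0 : d = 0 := by
      by_contra hdne
      have hd1 : 1 ≤ d := lt_of_le_of_ne (intMem_nonneg hd) (Ne.symm hdne)
      have hgd : intMem (glue x₂ H₁ x₁ H₂) (F' - x₂*F₁ - x₁*x₂ - x₁*(F₂ + d)) :=
        glue_intMem.2 ⟨c, 0, hc, hzero₂, by linear_combination heq⟩
      exact (hB (F₂ + d)).1 (hF₂.2 _ (by linarith)) hgd
    have hgF₁ : intMem (glue x₂ H₁ x₁ H₂) (F' - x₁*F₂ - x₁*x₂ - x₂*F₁) := by
      by_contra hn
      exact hF₁.1 ((hB' F₁).mpr hn)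
    rw [glue_intMem] at hgF₁
    obtain ⟨c', d', hc', hd', heq'⟩ := hgF₁
    have hc'0 : c' = 0 := by
      by_contra hcne
      have hc1 : 1 ≤ c' := lt_of_le_of_ne (intMem_nonneg hc') (Ne.symm hcne)
      have hgc : intMem (glue x₂ H₁ x₁ H₂) (F' - x₁*F₂ - x₁*x₂ - x₂*(F₁ + c')) :=
        glue_intMem.2 ⟨0, d', hzero₁, hd', by linear_combination heq'⟩
      exact (hB' (F₁ + c')).1 (hF₁.2 _ (by linarith)) hgc
    subst hd0; subst hc'0
    have hcd : (x₂:ℤ) * c = x₁ * d' := by linear_combination heq' - heq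
    have hdvd : (x₁:ℤ) ∣ c := (coprime_int hgcd).dvd_of_dvd_mul_left ⟨d', hcd⟩
    obtain ⟨e, he⟩ := hdvd
    have hcnn := intMem_nonneg hc
    have he0 : e = 0 := by
      by_contra hene
      have he1 : 1 ≤ e := by nlinarith [lt_of_le_of_ne (by nlinarith : (0:ℤ) ≤ e) (Ne.symm hene)]
      have hg0 : intMem (glue x₂ H₁ x₁ H₂) (F' - x₂*F₁ - x₁*x₂ - x₁*(F₂ + x₂*e)) := by
        apply glue_intMem.2 ⟨0, 0, hzero₁, hzero₂, ?_⟩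
        linear_combination heq + (x₂:ℤ) * he
      exact (hB (F₂ + x₂*e)).1 (hF₂.2 _ (by nlinarith)) hg0
    have hc0 : c = 0 := by rw [he, he0, mul_zero]
    have hFval : F' = x₂*F₁ + x₁*F₂ + x₁*x₂ := by
      rw [hc0] at heq; linear_combination heq
    constructor
    · refine ⟨F₁, hF₁, ?_⟩
      intro α
      by_contra hcon
      push_neg at hcon
      obtain ⟨h1, h2⟩ := hcon
      have g1 : intMem (glue x₂ H₁ x₁ H₂) (F' - x₁*F₂ - x₁*x₂ - x₂*α) := by
        by_contra hn; exact h1 ((hB' α).mpr hn)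
      have g2 : intMem (glue x₂ H₁ x₁ H₂) (F' - x₁*F₂ - x₁*x₂ - x₂*(F₁ - α)) := by
        by_contra hn; exact h2 ((hB' (F₁ - α)).mpr hn)
      have hsum := glue_ns hH₁ hH₂ g1 g2
      have heqs : (F' - (x₁:ℤ)*F₂ - x₁*x₂ - x₂*α) + (F' - x₁*F₂ - x₁*x₂ - x₂*(F₁ - α))
          = x₂*F₁ + x₁*0 := by linear_combination 2 * hFval
      rw [heqs] at hsum
      have h3 := (lemA hH₁ hH₂ hx₁H hx₂H hx₁0 hgcd hF₁ hF₂).1 hsum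
      have := intMem_nonneg h3
      linarith
    · refine ⟨F₂, hF₂, ?_⟩
      intro β
      by_contra hcon
      push_neg at hcon
      obtain ⟨h1, h2⟩ := hcon
      have g1 : intMem (glue x₂ H₁ x₁ H₂) (F' - x₂*F₁ - x₁*x₂ - x₁*β) := by
        by_contra hn; exact h1 ((hB β).mpr hn)
      have g2 : intMem (glue x₂ H₁ x₁ H₂) (F' - x₂*F₁ - x₁*x₂ - x₁*(F₂ - β)) := by
        by_contra hn; exact h2 ((hB (F₂ - β)).mpr hn)
      have hsum := glue_ns hH₁ hH₂ g1 g2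
      have heqs : (F' - (x₂:ℤ)*F₁ - x₁*x₂ - x₁*β) + (F' - x₂*F₁ - x₁*x₂ - x₁*(F₂ - β))
          = x₂*0 + x₁*F₂ := by linear_combination 2 * hFval
      rw [heqs] at hsum
      have h3 := (lemA' hH₁ hH₂ hx₁H hx₂H hx₁0 hx₂0 hgcd hF₁ hF₂).1 hsum
      have := intMem_nonneg h3
      linarith
  · rintro ⟨⟨F₁, hF₁, hs₁⟩, ⟨F₂, hF₂, hs₂⟩⟩
    refine ⟨x₂*F₁ + x₁*F₂ + x₁*x₂,
      ⟨frob_glue_not_mem hH₁ hH₂ hx₁H hx₂H hx₁0 hgcd hF₁ hF₂, ?_⟩,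
      glue_symm_of_symm hH₁ hH₂ hx₁H hx₂H hx₁0 hx₂0 hgcd hF₁ hF₂ hs₁ hs₂⟩
    intro z hz
    rcases glue_symm_of_symm hH₁ hH₂ hx₁H hx₂H hx₁0 hx₂0 hgcd hF₁ hF₂ hs₁ hs₂ z with h | h
    · exact h
    · have := intMem_nonneg h
      linarith
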